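/- For every positive integer n and real ε ∈ (0,1), ∫₀^1 (1 − e^{iεξ})/(√(1−ξ²)(ε²ξ² − π²n²)) dξ = iε/(π²n²)·c + r, where c = ∫₀^1 ξ/√(1−ξ²) dξ = 1 and |r| ≤ C ε²/n² for an absolute constant C. -/

import Mathlib

open Real MeasureTheory Set

lemma ftc01 {g g' : ℝ → ℝ} (hc : ContinuousOn g (Icc 0 1))
    (hd : ∀ x ∈ Ioo (0:ℝ) 1, HasDerivAt g (g' x) x)
    (hp : ∀ x ∈ Ioo (0:ℝ) 1, 0 ≤ g' x) :
    IntegrableOn g' (Ioo (0:ℝ) 1) ∧ (∫ x in Ioo (0:ℝ) 1, g' x) = g 1 - g 0 := by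
  have hint : IntegrableOn g' (Ioc (0:ℝ) 1) := intervalIntegral.integrableOn_deriv_of_nonneg hc hd hp
  refine ⟨hint.mono_set Ioo_subset_Ioc_self, ?_⟩
  rw [← integral_Ioc_eq_integral_Ioo, ← intervalIntegral.integral_of_le (by norm_num : (0:ℝ) ≤ 1)]
  exact intervalIntegral.integral_eq_sub_of_hasDeriv_right_of_le (by norm_num) hc
    (fun x hx => (hd x hx).hasDerivWithinAt)
    ((intervalIntegrable_iff_integrableOn_Ioc_of_le (by norm_num)).2 hint)

lemma sqrt_pos01 {x : ℝ} (hx : x ∈ Ioo (0:ℝ) 1) : 0 < Real.sqrt (1 - x ^ 2) := by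
  apply Real.sqrt_pos.2; nlinarith [hx.1, hx.2]

lemma deriv_msqrt {x : ℝ} (hx : x ∈ Ioo (0:ℝ) 1) :
    HasDerivAt (fun x => -Real.sqrt (1 - x ^ 2)) (x / Real.sqrt (1 - x ^ 2)) x := by
  have h1 : (0:ℝ) < 1 - x ^ 2 := by nlinarith [hx.1, hx.2]
  have h2 : HasDerivAt (fun x : ℝ => 1 - x ^ 2) (-(2 * x)) x := by
    simpa using ((hasDerivAt_pow 2 x).const_sub 1)
  have h3 := (Real.hasDerivAt_sqrt h1.ne').comp x h2
  have h4 := h3.neg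
  refine h4.congr_deriv ?_
  have := Real.sq_sqrt h1.le
  have : Real.sqrt (1 - x ^ 2) ≠ 0 := (Real.sqrt_pos.2 h1).ne'
  field_simp

lemma part1 : IntegrableOn (fun x => x / Real.sqrt (1 - x ^ 2)) (Ioo (0:ℝ) 1) ∧
    (∫ x in Ioo (0:ℝ) 1, x / Real.sqrt (1 - x ^ 2)) = 1 := by
  have h := ftc01 (g := fun x => -Real.sqrt (1 - x ^ 2))
    (g' := fun x => x / Real.sqrt (1 - x ^ 2))
    (Continuous.continuousOn (by continuity))
    (fun x hx => deriv_msqrt hx)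
    (fun x hx => div_nonneg hx.1.le (Real.sqrt_nonneg _))
  simpa using h

lemma part2 : IntegrableOn (fun x => 1 / Real.sqrt (1 - x ^ 2)) (Ioo (0:ℝ) 1) ∧
    (∫ x in Ioo (0:ℝ) 1, 1 / Real.sqrt (1 - x ^ 2)) = π / 2 := by
  have h := ftc01 (g := Real.arcsin) (g' := fun x => 1 / Real.sqrt (1 - x ^ 2))
    Real.continuous_arcsin.continuousOn
    (fun x hx => Real.hasDerivAt_arcsin (by linarith [hx.1]) (ne_of_lt hx.2))
    (fun x hx => by positivity)
  simpa [Real.arcsin_one, Real.arcsin_zero] using h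


-- pointwise bound on ‖f - g‖
lemma ptwise (ε ξ s P : ℝ) (hs : 0 < s) (hP : 0 < P) (hε : 0 < ε) (hε1 : ε ≤ 1)
    (hξ0 : 0 < ξ) (hξ1 : ξ ≤ 1) (hP1 : 1 ≤ P)
    (hDle : P / 2 ≤ |ε ^ 2 * ξ ^ 2 - P|) (hDne : ε ^ 2 * ξ ^ 2 - P ≠ 0) :
    ‖(1 - Complex.exp (Complex.I * ε * ξ)) / ((s : ℂ) * ((ε ^ 2 * ξ ^ 2 - P : ℝ) : ℂ)) -
      ((ξ / s : ℝ) : ℂ) * (Complex.I * ε / (P : ℂ))‖ ≤ (4 * ε ^ 2 / P) * (1 / s) := by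
  set z : ℂ := Complex.I * ε * ξ with hz
  set D : ℝ := ε ^ 2 * ξ ^ 2 - P with hDdef
  have hznorm : ‖z‖ = ε * ξ := by
    simp [hz, norm_mul, Complex.norm_real, abs_of_pos hε, abs_of_pos hξ0]
  have hsne : (s : ℂ) ≠ 0 := by exact_mod_cast hs.ne'
  have hDne' : (D : ℂ) ≠ 0 := by exact_mod_cast hDne
  have hPne : (P : ℂ) ≠ 0 := by exact_mod_cast hP.ne'
  have hDcast : (D : ℂ) = (ε : ℂ) ^ 2 * (ξ : ℂ) ^ 2 - (P : ℂ) := by push_cast [hDdef]; ring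
  have key : (1 - Complex.exp z) / ((s : ℂ) * (D : ℂ)) -
      ((ξ / s : ℝ) : ℂ) * (Complex.I * ε / (P : ℂ)) =
      ((P : ℂ) * (1 - Complex.exp z + z) - z * ((ε : ℂ) ^ 2 * (ξ : ℂ) ^ 2)) /
        ((s : ℂ) * (D : ℂ) * (P : ℂ)) := by
    rw [Complex.ofReal_div]
    field_simp
    rw [hDcast, hz]
    ring
  rw [key, norm_div]
  have hden : ‖(s : ℂ) * (D : ℂ) * (P : ℂ)‖ = s * |D| * P := by
    simp [norm_mul, Complex.norm_real, Real.norm_eq_abs, abs_of_pos hs, abs_of_pos hP]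
  rw [hden]
  have h1 : ‖(1 : ℂ) - Complex.exp z + z‖ ≤ ε ^ 2 * ξ ^ 2 := by
    have hzle : ‖z‖ ≤ 1 := by
      rw [hznorm]; nlinarith
    have h := Complex.norm_exp_sub_one_sub_id_le hzle
    rw [hznorm] at h
    have heq : (1 : ℂ) - Complex.exp z + z = -(Complex.exp z - 1 - z) := by ring
    rw [heq, norm_neg]
    calc ‖Complex.exp z - 1 - z‖ ≤ (ε * ξ) ^ 2 := h
      _ = ε ^ 2 * ξ ^ 2 := by ring
  have h2 : ‖z * ((ε : ℂ) ^ 2 * (ξ : ℂ) ^ 2)‖ = ε * ξ * (ε ^ 2 * ξ ^ 2) := by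
    rw [norm_mul, hznorm, norm_mul, norm_pow, norm_pow, Complex.norm_real,
      Complex.norm_real, Real.norm_eq_abs, Real.norm_eq_abs, abs_of_pos hε, abs_of_pos hξ0]
  have hnum : ‖(P : ℂ) * (1 - Complex.exp z + z) - z * ((ε : ℂ) ^ 2 * (ξ : ℂ) ^ 2)‖
      ≤ 2 * P * ε ^ 2 := by
    calc ‖(P : ℂ) * (1 - Complex.exp z + z) - z * ((ε : ℂ) ^ 2 * (ξ : ℂ) ^ 2)‖
        ≤ ‖(P : ℂ) * (1 - Complex.exp z + z)‖ + ‖z * ((ε : ℂ) ^ 2 * (ξ : ℂ) ^ 2)‖ :=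
          norm_sub_le _ _
      _ ≤ P * (ε ^ 2 * ξ ^ 2) + ε * ξ * (ε ^ 2 * ξ ^ 2) := by
          rw [h2, norm_mul, Complex.norm_real, Real.norm_eq_abs, abs_of_pos hP]
          gcongr
      _ ≤ 2 * P * ε ^ 2 := by
          have hξ2 : ξ ^ 2 ≤ 1 := by nlinarith
          have h3 : ε ^ 2 * ξ ^ 2 ≤ ε ^ 2 := by nlinarith [sq_nonneg ε]
          have h4 : ε * ξ ≤ 1 := by nlinarith
          have hX : 0 ≤ ε ^ 2 * ξ ^ 2 := by positivity
          have h5 : ε * ξ * (ε ^ 2 * ξ ^ 2) ≤ ε ^ 2 := by nlinarith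
          have h6 : ε ^ 2 ≤ P * ε ^ 2 := by nlinarith [sq_nonneg ε]
          nlinarith [hP.le, sq_nonneg ε]
  have hdenlb : s * (P / 2) * P ≤ s * |D| * P := by gcongr
  calc ‖(P : ℂ) * (1 - Complex.exp z + z) - z * ((ε : ℂ) ^ 2 * (ξ : ℂ) ^ 2)‖ / (s * |D| * P)
      ≤ (2 * P * ε ^ 2) / (s * (P / 2) * P) :=
        div_le_div₀ (by positivity) hnum (by positivity) hdenlb
    _ = (4 * ε ^ 2 / P) * (1 / s) := by field_simp; ring

-- pointwise bound on ‖f‖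
lemma ptwise_f (ε ξ s P : ℝ) (hs : 0 < s) (hP : 0 < P)
    (hDle : P / 2 ≤ |ε ^ 2 * ξ ^ 2 - P|) :
    ‖(1 - Complex.exp (Complex.I * ε * ξ)) / ((s : ℂ) * ((ε ^ 2 * ξ ^ 2 - P : ℝ) : ℂ))‖
      ≤ (4 / P) * (1 / s) := by
  rw [norm_div, norm_mul, Complex.norm_real, Complex.norm_real, Real.norm_eq_abs,
    Real.norm_eq_abs, abs_of_pos hs]
  have hnum : ‖(1 : ℂ) - Complex.exp (Complex.I * ε * ξ)‖ ≤ 2 := by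
    have hexp : ‖Complex.exp (Complex.I * ε * ξ)‖ = 1 := by
      rw [Complex.norm_exp]
      simp [Complex.mul_re]
    calc ‖(1 : ℂ) - Complex.exp (Complex.I * ε * ξ)‖
        ≤ ‖(1 : ℂ)‖ + ‖Complex.exp (Complex.I * ε * ξ)‖ := norm_sub_le _ _
      _ = 2 := by rw [hexp]; norm_num
  have hdenlb : s * (P / 2) ≤ s * |ε ^ 2 * ξ ^ 2 - P| := by gcongr
  calc ‖(1 : ℂ) - Complex.exp (Complex.I * ε * ξ)‖ / (s * |ε ^ 2 * ξ ^ 2 - P|)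
      ≤ 2 / (s * (P / 2)) := div_le_div₀ (by norm_num) hnum (by positivity) hdenlb
    _ = (4 / P) * (1 / s) := by field_simp; ring

set_option maxHeartbeats 1000000 in
theorem stmt_19 :
    (∫ ξ in Ioo (0 : ℝ) 1, ξ / Real.sqrt (1 - ξ ^ 2)) = 1 ∧
    ∃ C : ℝ, 0 < C ∧ ∀ n : ℕ, 1 ≤ n → ∀ ε : ℝ, 0 < ε → ε < 1 →
      ‖(∫ ξ in Ioo (0 : ℝ) 1,
          (1 - Complex.exp (Complex.I * ε * ξ)) /
            ((Real.sqrt (1 - ξ ^ 2) : ℂ) * ((ε ^ 2 * ξ ^ 2 - π ^ 2 * (n : ℝ) ^ 2 : ℝ) : ℂ))) -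
        Complex.I * ε / ((π ^ 2 * (n : ℝ) ^ 2 : ℝ) : ℂ)‖ ≤ C * ε ^ 2 / (n : ℝ) ^ 2 := by
  refine ⟨part1.2, 2, by norm_num, ?_⟩
  intro n hn ε hε hε1
  have hN1 : (1:ℝ) ≤ (n:ℝ) := by exact_mod_cast hn
  have hπ2 : (2:ℝ) < π ^ 2 := by nlinarith [Real.pi_gt_three]
  have hN2 : (1:ℝ) ≤ ((n:ℝ)) ^ 2 := by nlinarith
  have hP2 : (2:ℝ) < π ^ 2 * (n:ℝ) ^ 2 := by nlinarith
  have hP0 : (0:ℝ) < π ^ 2 * (n:ℝ) ^ 2 := by linarith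
  have hP1 : (1:ℝ) ≤ π ^ 2 * (n:ℝ) ^ 2 := by linarith
  have hD : ∀ ξ ∈ Ioo (0:ℝ) 1,
      π ^ 2 * (n:ℝ) ^ 2 / 2 ≤ |ε ^ 2 * ξ ^ 2 - π ^ 2 * (n:ℝ) ^ 2| ∧
      ε ^ 2 * ξ ^ 2 - π ^ 2 * (n:ℝ) ^ 2 ≠ 0 := by
    intro ξ hξ
    have hε2 : ε ^ 2 < 1 := by nlinarith
    have hξ2 : ξ ^ 2 < 1 := by nlinarith [hξ.1, hξ.2]
    have h1 : ε ^ 2 * ξ ^ 2 < 1 := by nlinarith [sq_nonneg ξ, sq_nonneg ε]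
    have h2 : ε ^ 2 * ξ ^ 2 - π ^ 2 * (n:ℝ) ^ 2 < 0 := by nlinarith
    rw [abs_of_neg h2]
    exact ⟨by nlinarith [sq_nonneg (ε * ξ)], h2.ne⟩
  set f : ℝ → ℂ := fun ξ => (1 - Complex.exp (Complex.I * ε * ξ)) /
      ((Real.sqrt (1 - ξ ^ 2) : ℂ) * ((ε ^ 2 * ξ ^ 2 - π ^ 2 * (n : ℝ) ^ 2 : ℝ) : ℂ)) with hf
  set g : ℝ → ℂ := fun ξ =>
      ((ξ / Real.sqrt (1 - ξ ^ 2) : ℝ) : ℂ) *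
        (Complex.I * ε / ((π ^ 2 * (n : ℝ) ^ 2 : ℝ) : ℂ)) with hg
  have hs_int := part2.1
  have hg_int : IntegrableOn g (Ioo (0:ℝ) 1) :=
    (part1.1.ofReal (𝕜 := ℂ)).mul_const _
  have hf_meas : AEStronglyMeasurable f (volume.restrict (Ioo (0:ℝ) 1)) := by
    apply ContinuousOn.aestronglyMeasurable _ measurableSet_Ioo
    have hc1 : Continuous fun ξ : ℝ => (1 : ℂ) - Complex.exp (Complex.I * ε * ξ) :=
      continuous_const.sub (Complex.continuous_exp.comp
        ((continuous_const.mul Complex.continuous_ofReal)))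
    have hc2 : Continuous fun ξ : ℝ =>
        ((Real.sqrt (1 - ξ ^ 2) : ℝ) : ℂ) * ((ε ^ 2 * ξ ^ 2 - π ^ 2 * (n : ℝ) ^ 2 : ℝ) : ℂ) :=
      (Complex.continuous_ofReal.comp (Real.continuous_sqrt.comp (by fun_prop))).mul
        (Complex.continuous_ofReal.comp (by fun_prop))
    apply ContinuousOn.div
    · exact hc1.continuousOn
    · exact hc2.continuousOn
    · intro ξ hξ
      have hs := sqrt_pos01 hξ
      exact mul_ne_zero (by exact_mod_cast hs.ne') (by exact_mod_cast (hD ξ hξ).2)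
  have hf_int : IntegrableOn f (Ioo (0:ℝ) 1) := by
    apply Integrable.mono' (hs_int.const_mul (4 / (π ^ 2 * (n:ℝ) ^ 2))) hf_meas
    filter_upwards [ae_restrict_mem measurableSet_Ioo] with ξ hξ
    simp only [hf]
    exact ptwise_f ε ξ _ _ (sqrt_pos01 hξ) hP0 (hD ξ hξ).1
  have hg_val : (∫ ξ in Ioo (0:ℝ) 1, g ξ) =
      Complex.I * ε / ((π ^ 2 * (n : ℝ) ^ 2 : ℝ) : ℂ) := by
    rw [hg]
    simp_rw [← Complex.real_smul]
    rw [integral_smul_const, part1.2, one_smul]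
  have hsub : (∫ ξ in Ioo (0:ℝ) 1, f ξ) - Complex.I * ε / ((π ^ 2 * (n : ℝ) ^ 2 : ℝ) : ℂ)
      = ∫ ξ in Ioo (0:ℝ) 1, (f ξ - g ξ) := by
    rw [integral_sub hf_int hg_int, hg_val]
  have hmain : ‖∫ ξ in Ioo (0:ℝ) 1, (f ξ - g ξ)‖
      ≤ ∫ ξ in Ioo (0:ℝ) 1,
          (4 * ε ^ 2 / (π ^ 2 * (n:ℝ) ^ 2)) * (1 / Real.sqrt (1 - ξ ^ 2)) := by
    apply norm_integral_le_of_norm_le (hs_int.const_mul _)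
    filter_upwards [ae_restrict_mem measurableSet_Ioo] with ξ hξ
    exact ptwise ε ξ _ _ (sqrt_pos01 hξ) hP0 hε hε1.le hξ.1 hξ.2.le hP1
      (hD ξ hξ).1 (hD ξ hξ).2
  have hval : (∫ ξ in Ioo (0:ℝ) 1,
        (4 * ε ^ 2 / (π ^ 2 * (n:ℝ) ^ 2)) * (1 / Real.sqrt (1 - ξ ^ 2)))
      = (4 * ε ^ 2 / (π ^ 2 * (n:ℝ) ^ 2)) * (π / 2) := by
    rw [integral_const_mul, part2.2]
  have hfinal : (4 * ε ^ 2 / (π ^ 2 * (n:ℝ) ^ 2)) * (π / 2) ≤ 2 * ε ^ 2 / (n:ℝ) ^ 2 := by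
    rw [div_mul_eq_mul_div, div_le_div_iff₀ (by positivity) (by positivity)]
    have hπ1 : (1:ℝ) ≤ π := by linarith [Real.pi_gt_three]
    have hππ : π ≤ π ^ 2 := by nlinarith
    nlinarith [mul_nonneg (sq_nonneg ε) (sq_nonneg ((n:ℝ))), hππ]
  calc ‖(∫ ξ in Ioo (0:ℝ) 1, f ξ) - Complex.I * ε / ((π ^ 2 * (n : ℝ) ^ 2 : ℝ) : ℂ)‖
      = ‖∫ ξ in Ioo (0:ℝ) 1, (f ξ - g ξ)‖ := by rw [hsub]
    _ ≤ (4 * ε ^ 2 / (π ^ 2 * (n:ℝ) ^ 2)) * (π / 2) := hmain.trans_eq hval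
    _ ≤ 2 * ε ^ 2 / (n:ℝ) ^ 2 := hfinal
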